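/- A 0-dimensional dense-in-itself metric space X is not compact if and only if X can be partitioned into infinitely many non-empty open sets. -/

import Mathlib

open Filter Set Metric Topology

theorem stmt_8 {X : Type*} [MetricSpace X] [PerfectSpace X]
    (h0 : ∀ x : X, ∀ U ∈ nhds x, ∃ V : Set X, IsClopen V ∧ x ∈ V ∧ V ⊆ U) :
    ¬ CompactSpace X ↔
      ∃ P : Set (Set X), P.Infinite ∧ (∀ O ∈ P, IsOpen O ∧ O.Nonempty) ∧
        ⋃₀ P = Set.univ ∧ P.Pairwise Disjoint := by
  constructor
  · intro hnc
    have hseq : ¬ SeqCompactSpace X := fun h =>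
      hnc (compactSpace_iff_seqCompactSpace.mpr h)
    rw [seqCompactSpace_iff] at hseq
    simp only [IsSeqCompact] at hseq
    push_neg at hseq
    obtain ⟨u, -, hu⟩ := hseq
    have hncl : ∀ y : X, ¬ MapClusterPt y atTop u := by
      intro y hy
      obtain ⟨ψ, hψ, hten⟩ := TopologicalSpace.FirstCountableTopology.tendsto_subseq hy
      exact hu y (Set.mem_univ y) ψ hψ hten
    -- only finitely many terms in a small ball
    have C0 : ∀ y : X, ∃ r > 0, {n : ℕ | u n ∈ Metric.ball y r}.Finite := by
      intro y
      have h1 := hncl y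
      rw [mapClusterPt_iff_frequently] at h1
      push_neg at h1
      obtain ⟨s, hs, hev⟩ := h1
      obtain ⟨N, hN⟩ := Filter.eventually_atTop.mp hev
      obtain ⟨r, hr, hball⟩ := Metric.mem_nhds_iff.mp hs
      refine ⟨r, hr, (Set.finite_Iio N).subset ?_⟩
      intro n hn
      rw [Set.mem_Iio]
      by_contra h
      exact hN n (not_lt.mp h) (hball hn)
    -- range of u is infinite
    have hDinf : (Set.range u).Infinite := by
      intro hfin
      have hsub : (Set.univ : Set ℕ) ⊆ ⋃ v ∈ Set.range u, u ⁻¹' {v} := by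
        intro n _; exact Set.mem_biUnion (Set.mem_range_self n) rfl
      have hfin2 : (Set.univ : Set ℕ).Finite := by
        refine Set.Finite.subset (hfin.biUnion fun v _ => ?_) hsub
        obtain ⟨r, hr, hfr⟩ := C0 v
        refine hfr.subset ?_
        intro n hn
        simp only [Set.mem_preimage, Set.mem_singleton_iff] at hn
        simp [hn, Metric.mem_ball, hr]
      exact Set.infinite_univ hfin2
    -- isolation radii
    have C1 : ∀ y : X, ∃ r > 0, ∀ z ∈ Set.range u, z ∈ Metric.ball y r → z = y := by
      intro y
      obtain ⟨r, hr, hfin⟩ := C0 y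
      set T : Set X := (u '' {n | u n ∈ Metric.ball y r}) \ {y} with hT
      have hTfin : T.Finite := (hfin.image u).sdiff
      have hTc : IsClosed T := hTfin.isClosed
      have hyT : y ∈ Tᶜ := fun h => h.2 rfl
      obtain ⟨r', hr', hball⟩ := Metric.isOpen_iff.mp hTc.isOpen_compl y hyT
      refine ⟨min r r', lt_min hr hr', ?_⟩
      rintro z ⟨n, rfl⟩ hz
      by_contra hne
      have h1 : u n ∈ Metric.ball y r :=
        Metric.mem_ball.mpr (lt_of_lt_of_le (Metric.mem_ball.mp hz) (min_le_left _ _))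
      have h2 : u n ∈ T := ⟨Set.mem_image_of_mem u h1, hne⟩
      have h3 : u n ∈ Metric.ball y r' :=
        Metric.mem_ball.mpr (lt_of_lt_of_le (Metric.mem_ball.mp hz) (min_le_right _ _))
      exact hball h3 h2
    -- enumerate points
    set D := Set.range u with hD
    let e := Set.Infinite.natEmbedding _ hDinf
    set x : ℕ → X := fun n => (e n : X) with hx
    have hxD : ∀ n, x n ∈ D := fun n => (e n).2
    have hxinj : Function.Injective x := fun a b hab => e.injective (Subtype.ext hab)
    have hr : ∀ n : ℕ, ∃ r > 0, ∀ z ∈ D, z ∈ Metric.ball (x n) r → z = x n := fun n => C1 (x n)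
    choose r hrpos hrprop using hr
    set ε : ℕ → ℝ := fun n => min (r n / 3) (1 / (n + 1)) with hε
    have hεpos : ∀ n, 0 < ε n := fun n => lt_min (by linarith [hrpos n]) (by positivity)
    have hεle : ∀ n : ℕ, ε n ≤ 1 / (n + 1) := fun n => min_le_right _ _
    have hεr : ∀ n, ε n ≤ r n / 3 := fun n => min_le_left _ _
    have hV : ∀ n : ℕ, ∃ V : Set X, IsClopen V ∧ x n ∈ V ∧ V ⊆ Metric.ball (x n) (ε n) :=
      fun n => h0 (x n) _ (Metric.ball_mem_nhds _ (hεpos n))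
    choose V hVclopen hxV hVsub using hV
    have hdist : ∀ m n : ℕ, m ≠ n → r m ≤ dist (x n) (x m) := by
      intro m n hmn
      by_contra h
      push_neg at h
      have := hrprop m (x n) (hxD n) (Metric.mem_ball.mpr h)
      exact hmn (hxinj this).symm
    have hdisj : ∀ m n : ℕ, m ≠ n → Disjoint (V m) (V n) := by
      intro m n hmn
      rw [Set.disjoint_left]
      intro z hzm hzn
      have h1 := Metric.mem_ball.mp (hVsub m hzm)
      have h2 := Metric.mem_ball.mp (hVsub n hzn)
      have h3 : dist (x n) (x m) ≤ dist (x n) z + dist z (x m) := dist_triangle _ _ _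
      have h4 : dist (x n) z = dist z (x n) := dist_comm _ _
      have h5 := hdist m n hmn
      have h6 := hdist n m (Ne.symm hmn)
      have h7 : dist (x m) (x n) = dist (x n) (x m) := dist_comm _ _
      have h8 := hεr m
      have h9 := hεr n
      have h10 := hrpos m
      linarith
    set S : Set X := ⋃ n, V (n + 1) with hS
    have hSc : IsClosed S := by
      rw [← isOpen_compl_iff, isOpen_iff_mem_nhds]
      intro y hy
      obtain ⟨r₁, hr₁, hball⟩ := C1 y
      obtain ⟨N, hN⟩ := exists_nat_one_div_lt (show (0:ℝ) < r₁ / 4 by linarith)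
      set W : Set X := Metric.ball y (r₁ / 2) ∩ ⋂ n ∈ Finset.range N, (V (n + 1))ᶜ with hW
      have hWopen : IsOpen W := IsOpen.inter Metric.isOpen_ball
        (isOpen_biInter_finset fun n _ => (hVclopen (n+1)).isClosed.isOpen_compl)
      have hyW : y ∈ W := by
        refine ⟨Metric.mem_ball_self (by linarith), ?_⟩
        simp only [Set.mem_iInter]
        intro n _ hyV
        exact hy (Set.mem_iUnion.mpr ⟨n, hyV⟩)
      refine Filter.mem_of_superset (hWopen.mem_nhds hyW) ?_
      rintro z ⟨hz1, hz2⟩ hzS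
      obtain ⟨k, hzk⟩ := Set.mem_iUnion.mp hzS
      by_cases hk : k < N
      · simp only [Set.mem_iInter] at hz2
        exact hz2 k (Finset.mem_range.mpr hk) hzk
      · push_neg at hk
        have hεk : ε (k + 1) < r₁ / 4 := by
          have hc1 : ε (k+1) ≤ 1 / ((k:ℝ) + 1 + 1) := by
            have := hεle (k+1); push_cast at this; linarith
          calc ε (k+1) ≤ 1 / ((k:ℝ) + 1 + 1) := hc1
          _ ≤ 1 / (N + 1) := by
            apply one_div_le_one_div_of_le
            · positivity
            · have : (N:ℝ) ≤ (k:ℝ) := Nat.cast_le.mpr hk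
              linarith
          _ < r₁ / 4 := hN
        have h1 := Metric.mem_ball.mp (hVsub (k+1) hzk)
        have h2 := Metric.mem_ball.mp hz1
        have hd : dist (x (k+1)) y < r₁ := by
          calc dist (x (k+1)) y ≤ dist (x (k+1)) z + dist z y := dist_triangle _ _ _
          _ = dist z (x (k+1)) + dist z y := by rw [dist_comm]
          _ < ε (k+1) + r₁/2 := by linarith
          _ < r₁ := by linarith
        have heq := hball (x (k+1)) (hxD _) (Metric.mem_ball.mpr hd)
        apply hy
        refine Set.mem_iUnion.mpr ⟨k, ?_⟩
        rw [← heq]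
        exact hxV (k+1)
    refine ⟨insert Sᶜ (Set.range fun n => V (n + 1)), ?_, ?_, ?_, ?_⟩
    · apply Set.Infinite.mono (Set.subset_insert _ _)
      apply Set.infinite_range_of_injective
      intro a b hab
      by_contra hne
      have hab' : V (a+1) = V (b+1) := hab
      have hd := hdisj (a+1) (b+1) (by omega)
      rw [hab', disjoint_self, Set.bot_eq_empty] at hd
      exact Set.notMem_empty _ (hd ▸ hxV (b+1))
    · rintro O hO
      rcases Set.mem_insert_iff.mp hO with rfl | ⟨n, rfl⟩
      · refine ⟨hSc.isOpen_compl, ⟨x 0, ?_⟩⟩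
        intro h
        obtain ⟨n, hn⟩ := Set.mem_iUnion.mp h
        exact Set.disjoint_left.mp (hdisj 0 (n+1) (by omega)) (hxV 0) hn
      · exact ⟨(hVclopen (n+1)).isOpen, ⟨x (n+1), hxV (n+1)⟩⟩
    · ext z
      simp only [Set.mem_sUnion, Set.mem_univ, iff_true]
      by_cases hz : z ∈ S
      · obtain ⟨n, hn⟩ := Set.mem_iUnion.mp hz
        exact ⟨V (n+1), Set.mem_insert_of_mem _ ⟨n, rfl⟩, hn⟩
      · exact ⟨Sᶜ, Set.mem_insert _ _, hz⟩
    · rintro A hA B hB hAB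
      rcases Set.mem_insert_iff.mp hA with rfl | ⟨a, rfl⟩ <;>
        rcases Set.mem_insert_iff.mp hB with rfl | ⟨b, rfl⟩
      · exact absurd rfl hAB
      · rw [Set.disjoint_left]
        intro z hz1 hz2
        exact hz1 (Set.mem_iUnion.mpr ⟨b, hz2⟩)
      · rw [Set.disjoint_right]
        intro z hz1 hz2
        exact hz1 (Set.mem_iUnion.mpr ⟨a, hz2⟩)
      · exact hdisj (a+1) (b+1) fun h => hAB (by rw [Nat.succ_injective h])
  · rintro ⟨P, hPinf, hPprop, hPcov, hPdisj⟩ hc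
    have hcov : (Set.univ : Set X) ⊆ ⋃ O : P, (O : Set X) := by
      rw [← Set.sUnion_eq_iUnion, hPcov]
    obtain ⟨s, hs⟩ := hc.isCompact_univ.elim_finite_subcover (fun O : P => (O : Set X))
      (fun O => (hPprop O O.2).1) hcov
    obtain ⟨O, hO⟩ := (hPinf.diff (s.finite_toSet.image fun i : P => (i : Set X))).nonempty
    obtain ⟨z, hz⟩ := (hPprop O hO.1).2
    have hzU := hs (Set.mem_univ z)
    simp only [Set.mem_iUnion] at hzU
    obtain ⟨i, his, hzi⟩ := hzU
    have hne : O ≠ (i : Set X) := fun h => hO.2 ⟨i, Finset.mem_coe.mpr his, h.symm⟩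
    exact Set.disjoint_left.mp (hPdisj hO.1 i.2 hne) hz hzi
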